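/- arXiv:1809.01384 — 2 statements merged into one kernel-verified Lean document; each statement's English description precedes it below -/
import Mathlib

section
/- For every integer k ≥ 2, every n ≥ 1, and all natural numbers d ≤ n−1 and j, the number of permutations σ ∈ S_n(132) with des(σ) = d and (12⋯k)-mch(σ) = j equals the number of permutations σ ∈ S_n(132) with des(σ) = n−1−d and (k(k−1)⋯21)-mch(σ) = j, where 12⋯k denotes the identity permutation of length k and k(k−1)⋯21 denotes the decreasing permutation of length k. -/
open Finset

/-- The value of a permutation of `Fin n` at a (0-indexed) natural number index,
with junk value `0` outside the range. -/
def permVal {n : ℕ} (σ : Equiv.Perm (Fin n)) (j : ℕ) : ℕ :=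
  if h : j < n then (σ ⟨j, h⟩ : ℕ) else 0

/-- The number of descents of `σ`: 0-indexed positions `i < n-1` with `σ i > σ (i+1)`. -/
def desc {n : ℕ} (σ : Equiv.Perm (Fin n)) : ℕ :=
  ((Finset.range (n - 1)).filter (fun i => permVal σ (i + 1) < permVal σ i)).card

/-- The number of consecutive `γ`-matches in `σ`. -/
def cmch {m n : ℕ} (γ : Equiv.Perm (Fin m)) (σ : Equiv.Perm (Fin n)) : ℕ :=
  ((Finset.range (n + 1 - m)).filter (fun i =>
    ∀ a b : Fin m, (permVal σ (i + (a : ℕ)) < permVal σ (i + (b : ℕ)) ↔ γ a < γ b))).card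

/-- `σ` classically avoids the pattern `lam`. -/
def avoids {l n : ℕ} (lam : Equiv.Perm (Fin l)) (σ : Equiv.Perm (Fin n)) : Prop :=
  ¬ ∃ f : Fin l → Fin n, StrictMono f ∧
      ∀ a b : Fin l, (σ (f a) < σ (f b) ↔ lam a < lam b)

/-- index with default 0 -/
def idx (l : List ℕ) (i : ℕ) : ℕ := l.getD i 0

lemma idx_lt_length {l : List ℕ} {i : ℕ} (h : i < l.length) : idx l i = l[i] :=
  List.getD_eq_getElem l 0 h

lemma idx_mem {l : List ℕ} {i : ℕ} (h : i < l.length) : idx l i ∈ l := by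
  rw [idx_lt_length h]; exact List.getElem_mem h

lemma idx_append_left {a b : List ℕ} {i : ℕ} (h : i < a.length) :
    idx (a ++ b) i = idx a i := List.getD_append a b 0 i h

lemma idx_append_right {a b : List ℕ} {i : ℕ} (h : a.length ≤ i) :
    idx (a ++ b) i = idx b (i - a.length) := List.getD_append_right a b 0 i h

lemma idx_cons_succ {x : ℕ} {t : List ℕ} {i : ℕ} : idx (x :: t) (i+1) = idx t i := rfl

lemma idx_cons_zero {x : ℕ} {t : List ℕ} : idx (x :: t) 0 = x := rfl

/-- descent word -/
def dword : List ℕ → List Bool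
  | [] => []
  | [_] => []
  | a :: b :: t => decide (b < a) :: dword (b :: t)

@[simp] lemma dword_nil : dword [] = [] := rfl
@[simp] lemma dword_single (a : ℕ) : dword [a] = [] := rfl
lemma dword_cons_cons (a b : ℕ) (t : List ℕ) :
    dword (a :: b :: t) = decide (b < a) :: dword (b :: t) := rfl

lemma dword_length : ∀ l : List ℕ, (dword l).length = l.length - 1
  | [] => rfl
  | [_] => rfl
  | a :: b :: t => by
      rw [dword_cons_cons]
      simp [dword_length (b :: t)]

lemma dword_getD : ∀ (l : List ℕ) (i : ℕ), i + 1 < l.length →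
    (dword l).getD i false = decide (idx l (i+1) < idx l i)
  | [], i, h => by simp at h
  | [_], i, h => by simp at h
  | a :: b :: t, 0, h => by simp [dword_cons_cons, idx]
  | a :: b :: t, (i+1), h => by
      rw [dword_cons_cons]
      have := dword_getD (b :: t) i (by simpa using h)
      exact this

lemma dword_append : ∀ (a b : List ℕ), a ≠ [] → b ≠ [] →
    dword (a ++ b) = dword a ++ decide (idx b 0 < idx a (a.length - 1)) :: dword b
  | [], b, ha, hb => absurd rfl ha
  | [x], c :: u, ha, hb => by simp [dword_cons_cons, idx]
  | [x], [], ha, hb => absurd rfl hb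
  | x :: y :: t, b, ha, hb => by
      have h := dword_append (y :: t) b (by simp) hb
      have e : (y :: t) ++ b = y :: (t ++ b) := rfl
      rw [e] at h
      have e1 : dword (x :: y :: t ++ b) = decide (y < x) :: dword (y :: (t ++ b)) := rfl
      rw [e1, h, dword_cons_cons]
      simp [idx_cons_succ, List.length_cons]

/-- count of trues -/
def ctrue (w : List Bool) : ℕ := w.count true

@[simp] lemma ctrue_nil : ctrue [] = 0 := rfl
lemma ctrue_append (x y : List Bool) : ctrue (x ++ y) = ctrue x + ctrue y := by
  simp [ctrue]

lemma ctrue_add_cfalse : ∀ w : List Bool, ctrue w + w.count false = w.length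
  | [] => rfl
  | b :: t => by
      have h := ctrue_add_cfalse t
      cases b <;> simp only [ctrue, List.count_cons, List.length_cons] at * <;> simp <;> omega

def revnot (w : List Bool) : List Bool := (w.map (fun b => !b)).reverse

@[simp] lemma length_revnot (w : List Bool) : (revnot w).length = w.length := by
  simp [revnot]

lemma revnot_revnot (w : List Bool) : revnot (revnot w) = w := by
  simp only [revnot, List.map_reverse, List.reverse_reverse, List.map_map]
  have : ((fun b => !b) ∘ fun b : Bool => !b) = id := by funext b; simp
  simp [this]

lemma revnot_append (x y : List Bool) : revnot (x ++ y) = revnot y ++ revnot x := by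
  simp [revnot]

@[simp] lemma revnot_nil : revnot [] = [] := rfl
@[simp] lemma revnot_single (b : Bool) : revnot [b] = [!b] := rfl

lemma ctrue_revnot (w : List Bool) : ctrue (revnot w) = w.length - ctrue w := by
  have h1 : ctrue (revnot w) = (w.map (fun b => !b)).count true := by
    simp [revnot, ctrue]
  have h2 : ∀ v : List Bool, (v.map (fun b => !b)).count true = v.count false := by
    intro v
    induction v with
    | nil => rfl
    | cons b t ih => cases b <;> simp [List.count_cons, ih]
  have h3 := ctrue_add_cfalse w
  rw [h1, h2 w]
  omega

lemma getElem_revnot (w : List Bool) (i : ℕ) (h : i < w.length) :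
    (revnot w).getD i false = !(w.getD (w.length - 1 - i) false) := by
  have h1 : i < (revnot w).length := by simpa using h
  have h2 : w.length - 1 - i < w.length := by omega
  rw [List.getD_eq_getElem _ _ h1, List.getD_eq_getElem _ _ h2]
  simp only [revnot]
  rw [List.getElem_reverse]
  simp
/-- number of windows of `k-1` consecutive letters `bb` -/
def mtch (bb : Bool) (k : ℕ) (w : List Bool) : ℕ :=
  ((Finset.range (w.length + 2 - k)).filter
    (fun i => ∀ t, t < k - 1 → w.getD (i+t) false = bb)).card

lemma flip_helper (w : List Bool) (k i t : ℕ) (hk : 2 ≤ k) (hi : i + k ≤ w.length + 1)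
    (ht : t < k - 1) :
    (revnot w).getD (i + t) false
      = !(w.getD ((w.length + 1 - k - i) + (k - 2 - t)) false) := by
  have h1 : i + t < w.length := by omega
  rw [getElem_revnot w _ h1]
  congr 2
  omega

lemma mtch_cond_flip (w : List Bool) (k i : ℕ) (hk : 2 ≤ k) (hi : i + k ≤ w.length + 1) :
    (∀ t, t < k - 1 → (revnot w).getD (i+t) false = true) ↔
    (∀ t, t < k - 1 → w.getD ((w.length + 1 - k - i) + t) false = false) := by
  constructor
  · intro h t ht
    have h2 := h (k - 2 - t) (by omega)
    rw [flip_helper w k i (k-2-t) hk hi (by omega)] at h2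
    have e : k - 2 - (k - 2 - t) = t := by omega
    rw [e] at h2
    cases hc : w.getD (w.length + 1 - k - i + t) false
    · rfl
    · rw [hc] at h2; simp at h2
  · intro h t ht
    rw [flip_helper w k i t hk hi ht, h (k - 2 - t) (by omega)]
    rfl

lemma mtch_revnot (k : ℕ) (hk : 2 ≤ k) (w : List Bool) :
    mtch true k (revnot w) = mtch false k w := by
  classical
  unfold mtch
  rw [length_revnot]
  set N := w.length + 2 - k with hN
  apply Finset.card_bij' (i := fun a _ => N - 1 - a) (j := fun a _ => N - 1 - a)
  · intro a ha
    rw [Finset.mem_filter, Finset.mem_range] at ha ⊢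
    obtain ⟨ha1, ha2⟩ := ha
    have hk' : a + k ≤ w.length + 1 := by omega
    constructor
    · omega
    · have := (mtch_cond_flip w k a hk hk').mp ha2
      have e : w.length + 1 - k - a = N - 1 - a := by omega
      rwa [e] at this
  · intro a ha
    rw [Finset.mem_filter, Finset.mem_range] at ha ⊢
    obtain ⟨ha1, ha2⟩ := ha
    have hb : N - 1 - a < N := by omega
    have hk' : (N - 1 - a) + k ≤ w.length + 1 := by omega
    refine ⟨hb, ?_⟩
    rw [mtch_cond_flip w k (N-1-a) hk hk']
    have e : w.length + 1 - k - (N - 1 - a) = a := by omega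
    rwa [e]
  · intro a ha
    rw [Finset.mem_filter, Finset.mem_range] at ha
    omega
  · intro a ha
    rw [Finset.mem_filter, Finset.mem_range] at ha
    omega

lemma mtch_revnot' (k : ℕ) (hk : 2 ≤ k) (w : List Bool) :
    mtch false k (revnot w) = mtch true k w := by
  have := mtch_revnot k hk (revnot w)
  rw [revnot_revnot] at this
  exact this.symm
/-- reading of a binary tree as a 132-avoiding permutation list of `[lo, lo+size)` -/
def toL : Tree Unit → ℕ → List ℕ
  | .nil, _ => []
  | .node _ L R, lo =>
      toL L (lo + R.numNodes) ++ (lo + L.numNodes + R.numNodes) :: toL R lo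

@[simp] lemma toL_nil (lo : ℕ) : toL .nil lo = [] := rfl
lemma toL_node (L R : Tree Unit) (lo : ℕ) :
    toL (.node () L R) lo
      = toL L (lo + R.numNodes) ++ (lo + L.numNodes + R.numNodes) :: toL R lo := rfl

lemma toL_length : ∀ (T : Tree Unit) (lo : ℕ), (toL T lo).length = T.numNodes
  | .nil, _ => rfl
  | .node _ L R, lo => by
      rw [toL_node]
      simp [toL_length L, toL_length R, Tree.numNodes]
      omega

lemma mem_toL : ∀ (T : Tree Unit) (lo x : ℕ),
    x ∈ toL T lo ↔ lo ≤ x ∧ x < lo + T.numNodes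
  | .nil, lo, x => by simp [Tree.numNodes]
  | .node _ L R, lo, x => by
      rw [toL_node]
      simp only [List.mem_append, List.mem_cons, mem_toL L, mem_toL R, Tree.numNodes, BinaryTree.numNodes]
      omega

lemma nodup_toL : ∀ (T : Tree Unit) (lo : ℕ), (toL T lo).Nodup
  | .nil, _ => List.nodup_nil
  | .node _ L R, lo => by
      rw [toL_node, List.nodup_append']
      refine ⟨nodup_toL L _, ?_, ?_⟩
      · rw [List.nodup_cons]
        refine ⟨?_, nodup_toL R _⟩
        rw [mem_toL]; omega
      · intro x hx hy
        rw [mem_toL] at hx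
        rcases List.mem_cons.mp hy with h | h
        · omega
        · rw [mem_toL] at h; omega

lemma toL_inj : ∀ (T T' : Tree Unit) (lo : ℕ), toL T lo = toL T' lo → T = T'
  | .nil, .nil, _, _ => rfl
  | .nil, .node _ L R, lo, h => by
      have := congrArg List.length h
      rw [toL_length, toL_length] at this
      simp [Tree.numNodes] at this
  | .node _ L R, .nil, lo, h => by
      have := congrArg List.length h
      rw [toL_length, toL_length] at this
      simp [Tree.numNodes] at this
  | .node _ L R, .node _ L' R', lo, h => by
      have hlen := congrArg List.length h
      rw [toL_length, toL_length] at hlen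
      change L.numNodes + R.numNodes + 1 = L'.numNodes + R'.numNodes + 1 at hlen
      rw [toL_node, toL_node] at h
      -- lengths of the left parts agree
      have hA : (toL L (lo + R.numNodes)).length = L.numNodes := toL_length _ _
      have hA' : (toL L' (lo + R'.numNodes)).length = L'.numNodes := toL_length _ _
      have hLL : L.numNodes = L'.numNodes := by
        by_contra hne
        rcases Nat.lt_or_ge L.numNodes L'.numNodes with hlt | hge
        · -- element at position L.numNodes : LHS gives the max, RHS an element of toL L'
          have h1 : idx (toL L (lo + R.numNodes) ++ (lo + L.numNodes + R.numNodes) :: toL R lo)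
              L.numNodes = lo + L.numNodes + R.numNodes := by
            rw [idx_append_right (by omega)]
            rw [hA]
            simp [idx]
          have h2 : idx (toL L' (lo + R'.numNodes) ++ (lo + L'.numNodes + R'.numNodes) :: toL R' lo)
              L.numNodes = idx (toL L' (lo + R'.numNodes)) L.numNodes := by
            rw [idx_append_left (by omega)]
          have hmem : idx (toL L' (lo + R'.numNodes)) L.numNodes ∈ toL L' (lo + R'.numNodes) :=
            idx_mem (by omega)
          rw [mem_toL] at hmem
          rw [h] at h1
          rw [h2] at h1
          omega
        · have hgt : L'.numNodes < L.numNodes := by omega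
          have h1 : idx (toL L' (lo + R'.numNodes) ++ (lo + L'.numNodes + R'.numNodes) :: toL R' lo)
              L'.numNodes = lo + L'.numNodes + R'.numNodes := by
            rw [idx_append_right (by omega)]
            rw [hA']
            simp [idx]
          have h2 : idx (toL L (lo + R.numNodes) ++ (lo + L.numNodes + R.numNodes) :: toL R lo)
              L'.numNodes = idx (toL L (lo + R.numNodes)) L'.numNodes := by
            rw [idx_append_left (by omega)]
          have hmem : idx (toL L (lo + R.numNodes)) L'.numNodes ∈ toL L (lo + R.numNodes) :=
            idx_mem (by omega)
          rw [mem_toL] at hmem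
          rw [← h] at h1
          rw [h2] at h1
          omega
      have hRR : R.numNodes = R'.numNodes := by omega
      rw [hRR] at h
      obtain ⟨e1, e2⟩ := List.append_inj h (by rw [toL_length, toL_length]; omega)
      have e3 := List.tail_eq_of_cons_eq e2
      have := toL_inj L L' (lo + R'.numNodes) e1
      have := toL_inj R R' lo e3
      subst this
      cases ‹L = L'›
      rfl
/-- descent word of a tree -/
def wrd : Tree Unit → List Bool
  | .nil => []
  | .node _ L R =>
      wrd L ++ ((if L.numNodes = 0 then [] else [false]) ++
        ((if R.numNodes = 0 then [] else [true]) ++ wrd R))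

lemma toL_ne_nil {T : Tree Unit} (h : T.numNodes ≠ 0) (lo : ℕ) : toL T lo ≠ [] := by
  intro hc
  have := toL_length T lo
  rw [hc] at this
  simp at this
  omega

lemma tree_eq_nil {T : Tree Unit} (h : T.numNodes = 0) : T = .nil := by
  cases T with
  | nil => rfl
  | node v L R => simp [Tree.numNodes] at h

lemma dword_toL : ∀ (T : Tree Unit) (lo : ℕ), dword (toL T lo) = wrd T
  | .nil, lo => rfl
  | .node _ L R, lo => by
      rw [toL_node]
      rcases Nat.eq_zero_or_pos L.numNodes with hL | hL
      · have hAnil : toL L (lo + R.numNodes) = [] := by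
          have := toL_length L (lo + R.numNodes)
          rwa [hL, List.length_eq_zero_iff] at this
        have hwL : wrd L = [] := by rw [tree_eq_nil hL]; rfl
        rw [hAnil, List.nil_append]
        rcases Nat.eq_zero_or_pos R.numNodes with hR | hR
        · have hBnil : toL R lo = [] := by
            have := toL_length R lo
            rwa [hR, List.length_eq_zero_iff] at this
          have hwR : wrd R = [] := by rw [tree_eq_nil hR]; rfl
          rw [hBnil]
          simp [wrd, hL, hR, hwL, hwR]
        · have hR' : R.numNodes ≠ 0 := by omega
          have hBne : toL R lo ≠ [] := toL_ne_nil hR' lo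
          have h := dword_append [lo + L.numNodes + R.numNodes] (toL R lo) (by simp) hBne
          rw [List.singleton_append] at h
          rw [h]
          have hb0 : idx (toL R lo) 0 < lo + L.numNodes + R.numNodes := by
            have := idx_mem (l := toL R lo) (i := 0) (by rw [toL_length]; omega)
            rw [mem_toL] at this
            omega
          have hd1 : decide (idx (toL R lo) 0
              < idx [lo + L.numNodes + R.numNodes] ([lo + L.numNodes + R.numNodes].length - 1))
              = true := by
            simp only [List.length_singleton, Nat.sub_self, idx_cons_zero]
            exact decide_eq_true hb0
          rw [hd1]
          simp [wrd, hL, hR', hwL, dword_toL R]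
      · have hL' : L.numNodes ≠ 0 := by omega
        have hAne : toL L (lo + R.numNodes) ≠ [] := toL_ne_nil hL' _
        have hlast : idx (toL L (lo + R.numNodes)) ((toL L (lo + R.numNodes)).length - 1)
            < lo + L.numNodes + R.numNodes := by
          have := idx_mem (l := toL L (lo + R.numNodes))
            (i := (toL L (lo + R.numNodes)).length - 1)
            (by rw [toL_length]; omega)
          rw [mem_toL] at this
          omega
        rcases Nat.eq_zero_or_pos R.numNodes with hR | hR
        · have hBnil : toL R lo = [] := by
            have := toL_length R lo
            rwa [hR, List.length_eq_zero_iff] at this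
          have hwR : wrd R = [] := by rw [tree_eq_nil hR]; rfl
          rw [hBnil]
          have h := dword_append (toL L (lo + R.numNodes)) [lo + L.numNodes + R.numNodes]
            hAne (by simp)
          rw [h]
          have hd2 : decide
              (idx [lo + L.numNodes + R.numNodes] 0
                < idx (toL L (lo + R.numNodes)) ((toL L (lo + R.numNodes)).length - 1))
              = false := by
            rw [idx_cons_zero]
            exact decide_eq_false (by omega)
          rw [hd2]
          simp [wrd, hL', hR, hwR, dword_toL L]
        · have hR' : R.numNodes ≠ 0 := by omega
          have hBne : toL R lo ≠ [] := toL_ne_nil hR' lo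
          have h := dword_append (toL L (lo + R.numNodes))
            ((lo + L.numNodes + R.numNodes) :: toL R lo) hAne (by simp)
          rw [h]
          have h2 := dword_append [lo + L.numNodes + R.numNodes] (toL R lo) (by simp) hBne
          rw [List.singleton_append] at h2
          rw [h2]
          have hb0 : idx (toL R lo) 0 < lo + L.numNodes + R.numNodes := by
            have := idx_mem (l := toL R lo) (i := 0) (by rw [toL_length]; omega)
            rw [mem_toL] at this
            omega
          have hd1 : decide (idx (toL R lo) 0
              < idx [lo + L.numNodes + R.numNodes] ([lo + L.numNodes + R.numNodes].length - 1))
              = true := by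
            simp only [List.length_singleton, Nat.sub_self, idx_cons_zero]
            exact decide_eq_true hb0
          have hd2 : decide
              (idx ((lo + L.numNodes + R.numNodes) :: toL R lo) 0
                < idx (toL L (lo + R.numNodes)) ((toL L (lo + R.numNodes)).length - 1))
              = false := by
            rw [idx_cons_zero]
            exact decide_eq_false (by omega)
          rw [hd1, hd2]
          simp [wrd, hL', hR', dword_toL L, dword_toL R]

lemma wrd_length (T : Tree Unit) : (wrd T).length = T.numNodes - 1 := by
  have := dword_toL T 0
  have h2 := dword_length (toL T 0)
  rw [this, toL_length] at h2
  exact h2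

/-- mirror of a tree -/
def mirror : Tree Unit → Tree Unit
  | .nil => .nil
  | .node _ L R => .node () (mirror R) (mirror L)

@[simp] lemma numNodes_mirror : ∀ T : Tree Unit, (mirror T).numNodes = T.numNodes
  | .nil => rfl
  | .node _ L R => by
      simp [mirror, Tree.numNodes, numNodes_mirror L, numNodes_mirror R]
      omega

lemma mirror_mirror : ∀ T : Tree Unit, mirror (mirror T) = T
  | .nil => rfl
  | .node _ L R => by simp [mirror, mirror_mirror L, mirror_mirror R]

lemma wrd_mirror : ∀ T : Tree Unit, wrd (mirror T) = revnot (wrd T)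
  | .nil => rfl
  | .node _ L R => by
      have ihL := wrd_mirror L
      have ihR := wrd_mirror R
      show wrd (.node () (mirror R) (mirror L)) = _
      simp only [wrd, numNodes_mirror, ihL, ihR, revnot_append]
      by_cases hL : L.numNodes = 0 <;> by_cases hR : R.numNodes = 0 <;>
        simp [hL, hR, List.append_assoc]
/-- 132-avoidance for lists, via indices -/
def av132 (l : List ℕ) : Prop :=
  ∀ i j k : ℕ, i < j → j < k → k < l.length →
    ¬(idx l i < idx l k ∧ idx l k < idx l j)

lemma av132_toL : ∀ (T : Tree Unit) (lo : ℕ), av132 (toL T lo)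
  | .nil, lo => by intro i j k _ _ hk; simp at hk
  | .node _ L R, lo => by
      intro i j k hij hjk hk hpat
      obtain ⟨h1, h2⟩ := hpat
      rw [toL_node] at *
      set A := toL L (lo + R.numNodes) with hA
      set B := toL R lo with hB
      set m := lo + L.numNodes + R.numNodes with hm
      have hAlen : A.length = L.numNodes := toL_length _ _
      have hBlen : B.length = R.numNodes := toL_length _ _
      have hmemA : ∀ x, x ∈ A → lo + R.numNodes ≤ x ∧ x < m := by
        intro x hx
        rw [hA, mem_toL] at hx
        omega
      have hmemB : ∀ x, x ∈ B → lo ≤ x ∧ x < lo + R.numNodes := by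
        intro x hx
        rw [hB, mem_toL] at hx
        omega
      have hinA : ∀ p, p < A.length →
          idx (A ++ m :: B) p = idx A p ∧
          lo + R.numNodes ≤ idx (A ++ m :: B) p ∧ idx (A ++ m :: B) p < m := by
        intro p hp
        rw [idx_append_left hp]
        exact ⟨rfl, hmemA _ (idx_mem hp)⟩
      have hmid : idx (A ++ m :: B) A.length = m := by
        rw [idx_append_right le_rfl, Nat.sub_self, idx_cons_zero]
      have hinB : ∀ p, A.length < p → p < (A ++ m :: B).length →
          idx (A ++ m :: B) p = idx B (p - A.length - 1) ∧
          lo ≤ idx (A ++ m :: B) p ∧ idx (A ++ m :: B) p < lo + R.numNodes := by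
        intro p hplt hp
        rw [idx_append_right (by omega)]
        have hpos : p - A.length = (p - A.length - 1) + 1 := by omega
        rw [hpos, idx_cons_succ]
        have hidx : p - A.length - 1 < B.length := by
          simp only [List.length_append, List.length_cons] at hp
          omega
        exact ⟨rfl, hmemB _ (idx_mem hidx)⟩
      have hub : ∀ p, p < (A ++ m :: B).length → idx (A ++ m :: B) p ≤ m := by
        intro p hp
        rcases Nat.lt_trichotomy p A.length with h | h | h
        · have := hinA p h; omega
        · rw [h, hmid]
        · have := hinB p h hp; omega
      have hkne : k ≠ A.length := by
        intro he
        have hj := hub j (by omega)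
        have hk2 : idx (A ++ m :: B) k = m := by rw [he, hmid]
        omega
      rcases Nat.lt_or_ge k A.length with hkA | hkB
      · -- all inside A
        have e1 := (hinA i (by omega)).1
        have e2 := (hinA j (by omega)).1
        have e3 := (hinA k (by omega)).1
        rw [e1, e3] at h1
        rw [e2, e3] at h2
        have := av132_toL L (lo + R.numNodes) i j k hij hjk (by rw [← hA]; omega)
        rw [← hA] at this
        exact this ⟨h1, h2⟩
      · have hkB' : A.length < k := by omega
        have hk' := hinB k hkB' hk
        have hiB : A.length < i := by
          rcases Nat.lt_trichotomy i A.length with h | h | h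
          · have := hinA i h; omega
          · have hi2 : idx (A ++ m :: B) i = m := by rw [h, hmid]
            omega
          · exact h
        have hjB : A.length < j := by omega
        have hi' := hinB i hiB (by omega)
        have hj' := hinB j hjB (by omega)
        have hklen : k - A.length - 1 < B.length := by
          simp only [List.length_append, List.length_cons] at hk
          omega
        have := av132_toL R lo (i - A.length - 1) (j - A.length - 1) (k - A.length - 1)
          (by omega) (by omega) (by rw [← hB]; omega)
        rw [← hB] at this
        refine this ⟨?_, ?_⟩
        · rw [← hi'.1, ← hk'.1]; exact h1
        · rw [← hj'.1, ← hk'.1]; exact h2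
lemma exists_tree (n : ℕ) : ∀ (lo : ℕ) (l : List ℕ), l.length = n → l.Nodup →
    (∀ x, x ∈ l ↔ lo ≤ x ∧ x < lo + n) → av132 l → ∃ T : Tree Unit, toL T lo = l := by
  induction n using Nat.strong_induction_on with
  | _ n IH =>
    intro lo l hlen hnd hmem hav
    cases n with
    | zero =>
      refine ⟨.nil, ?_⟩
      rw [toL_nil]
      exact (List.length_eq_zero_iff.mp hlen).symm
    | succ s =>
      set m := lo + s with hm
      have hml : m ∈ l := (hmem m).mpr ⟨by omega, by omega⟩
      obtain ⟨a, b, rfl⟩ := List.append_of_mem hml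
      have hab : a.length + b.length = s := by
        simp only [List.length_append, List.length_cons] at hlen
        omega
      obtain ⟨nda, ndmb, disj⟩ := List.nodup_append'.mp hnd
      have ndb : b.Nodup := (List.nodup_cons.mp ndmb).2
      have hmnb : m ∉ b := (List.nodup_cons.mp ndmb).1
      have hmna : m ∉ a := fun h => disj h List.mem_cons_self
      -- key: every element of a is greater than every element of b
      have key : ∀ x ∈ a, ∀ y ∈ b, y < x := by
        intro x hx y hy
        by_contra hc
        have hxy : x ≠ y := fun he => disj hx (he ▸ List.mem_cons_of_mem m hy)
        have hxly : x < y := by omega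
        have hyl : y ∈ a ++ m :: b := List.mem_append_right a (List.mem_cons_of_mem m hy)
        have hym : y < m := by
          have := (hmem y).mp hyl
          have : y ≠ m := fun he => hmnb (he ▸ hy)
          omega
        obtain ⟨i1, hi1, he1⟩ := List.mem_iff_getElem.mp hx
        obtain ⟨i2, hi2, he2⟩ := List.mem_iff_getElem.mp hy
        have hv1 : idx (a ++ m :: b) i1 = x := by
          rw [idx_append_left hi1, idx_lt_length hi1, he1]
        have hv2 : idx (a ++ m :: b) a.length = m := by
          rw [idx_append_right le_rfl, Nat.sub_self, idx_cons_zero]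
        have hv3 : idx (a ++ m :: b) (a.length + 1 + i2) = y := by
          rw [idx_append_right (by omega)]
          have he : a.length + 1 + i2 - a.length = i2 + 1 := by omega
          rw [he, idx_cons_succ, idx_lt_length hi2, he2]
        exact hav i1 a.length (a.length + 1 + i2) hi1 (by omega)
          (by simp only [List.length_append, List.length_cons]; omega)
          ⟨by rw [hv1, hv3]; exact hxly, by rw [hv3, hv2]; exact hym⟩
      have hxm : ∀ x ∈ b, x < m := by
        intro x hx
        have h1 := (hmem x).mp (List.mem_append_right a (List.mem_cons_of_mem m hx))
        have h2 : x ≠ m := fun he => hmnb (he ▸ hx)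
        omega
      have hxa : ∀ x ∈ a, x < m := by
        intro x hx
        have h1 := (hmem x).mp (List.mem_append_left _ hx)
        have h2 : x ≠ m := fun he => hmna (he ▸ hx)
        omega
      -- membership characterization for b
      have hmemb : ∀ x, x ∈ b ↔ lo ≤ x ∧ x < lo + b.length := by
        intro x
        constructor
        · intro hx
          have h1 := (hmem x).mp (List.mem_append_right a (List.mem_cons_of_mem m hx))
          refine ⟨h1.1, ?_⟩
          by_contra hge
          have hsub : ∀ u, lo ≤ u → u ≤ x → u ∈ b := by
            intro u hu1 hu2
            have hxm' := hxm x hx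
            have hul : u ∈ a ++ m :: b := (hmem u).mpr ⟨hu1, by omega⟩
            rcases List.mem_append.mp hul with h | h
            · exact absurd (key u h x hx) (by omega)
            · rcases List.mem_cons.mp h with h' | h'
              · omega
              · exact h'
          have hss : Finset.Ico lo (x+1) ⊆ b.toFinset := by
            intro u hu
            rw [Finset.mem_Ico] at hu
            rw [List.mem_toFinset]
            exact hsub u hu.1 (by omega)
          have hcard := Finset.card_le_card hss
          rw [Nat.card_Ico, List.toFinset_card_of_nodup ndb] at hcard
          omega
        · intro ⟨h1, h2⟩
          have hxl : x ∈ a ++ m :: b := (hmem x).mpr ⟨h1, by omega⟩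
          have hxne : x ≠ m := by omega
          have hxna : x ∉ a := by
            intro hxa'
            have hss : b.toFinset ⊆ Finset.Ico lo x := by
              intro u hu
              rw [List.mem_toFinset] at hu
              rw [Finset.mem_Ico]
              have := (hmem u).mp (List.mem_append_right a (List.mem_cons_of_mem m hu))
              exact ⟨this.1, key x hxa' u hu⟩
            have hcard := Finset.card_le_card hss
            rw [Nat.card_Ico, List.toFinset_card_of_nodup ndb] at hcard
            omega
          rcases List.mem_append.mp hxl with h | h
          · exact absurd h hxna
          · rcases List.mem_cons.mp h with h' | h'
            · exact absurd h' hxne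
            · exact h'
      have hmema : ∀ x, x ∈ a ↔ lo + b.length ≤ x ∧ x < (lo + b.length) + a.length := by
        intro x
        constructor
        · intro hx
          have h1 := (hmem x).mp (List.mem_append_left _ hx)
          have h2 := hxa x hx
          have h3 : x ∉ b := fun hb' => disj hx (List.mem_cons_of_mem m hb')
          have h4 : ¬(lo ≤ x ∧ x < lo + b.length) := fun hc => h3 ((hmemb x).mpr hc)
          constructor
          · omega
          · omega
        · intro ⟨h1, h2⟩
          have hxl : x ∈ a ++ m :: b := (hmem x).mpr ⟨by omega, by omega⟩
          have hxne : x ≠ m := by omega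
          have hxnb : x ∉ b := by
            intro hb'
            have := (hmemb x).mp hb'
            omega
          rcases List.mem_append.mp hxl with h | h
          · exact h
          · rcases List.mem_cons.mp h with h' | h'
            · exact absurd h' hxne
            · exact absurd h' hxnb
      -- avoidance for the pieces
      have hava : av132 a := by
        intro i j k hij hjk hk hpat
        have e : ∀ p, p < a.length → idx (a ++ m :: b) p = idx a p :=
          fun p hp => idx_append_left hp
        refine hav i j k hij hjk (by simp only [List.length_append, List.length_cons]; omega) ?_
        rw [e i (by omega), e j (by omega), e k hk]
        exact hpat
      have havb : av132 b := by
        intro i j k hij hjk hk hpat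
        have e : ∀ p, p < b.length → idx (a ++ m :: b) (a.length + 1 + p) = idx b p := by
          intro p hp
          rw [idx_append_right (by omega)]
          have he : a.length + 1 + p - a.length = p + 1 := by omega
          rw [he, idx_cons_succ]
        refine hav (a.length + 1 + i) (a.length + 1 + j) (a.length + 1 + k)
          (by omega) (by omega) (by simp only [List.length_append, List.length_cons]; omega) ?_
        rw [e i (by omega), e j (by omega), e k hk]
        exact hpat
      -- apply the induction hypothesis
      obtain ⟨TL, hTL⟩ := IH a.length (by omega) (lo + b.length) a rfl nda hmema hava
      obtain ⟨TR, hTR⟩ := IH b.length (by omega) lo b rfl ndb hmemb havb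
      refine ⟨.node () TL TR, ?_⟩
      have hnL : TL.numNodes = a.length := by rw [← toL_length TL (lo + b.length), hTL]
      have hnR : TR.numNodes = b.length := by rw [← toL_length TR lo, hTR]
      rw [toL_node, hnR, hTL, hnL, hTR]
      have : lo + a.length + b.length = m := by omega
      rw [this]
/-- the list of values of a permutation -/
def permToList {n : ℕ} (σ : Equiv.Perm (Fin n)) : List ℕ := List.ofFn (fun i => (σ i : ℕ))

lemma length_permToList {n : ℕ} (σ : Equiv.Perm (Fin n)) : (permToList σ).length = n := by
  simp [permToList]

lemma idx_permToList {n : ℕ} (σ : Equiv.Perm (Fin n)) {i : ℕ} (h : i < n) :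
    idx (permToList σ) i = (σ ⟨i, h⟩ : ℕ) := by
  have h' : i < (permToList σ).length := by rw [length_permToList]; exact h
  rw [idx_lt_length h']
  simp only [permToList]
  rw [List.getElem_ofFn]

lemma nodup_permToList {n : ℕ} (σ : Equiv.Perm (Fin n)) : (permToList σ).Nodup := by
  rw [permToList, List.nodup_ofFn]
  intro a b hab
  exact σ.injective (Fin.val_injective hab)

lemma mem_permToList {n : ℕ} (σ : Equiv.Perm (Fin n)) (x : ℕ) :
    x ∈ permToList σ ↔ x < n := by
  rw [permToList, List.mem_ofFn]
  constructor
  · rintro ⟨i, rfl⟩; exact (σ i).isLt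
  · intro hx
    exact ⟨σ.symm ⟨x, hx⟩, by simp⟩

lemma permToList_inj {n : ℕ} {σ τ : Equiv.Perm (Fin n)} (h : permToList σ = permToList τ) :
    σ = τ := by
  apply Equiv.ext
  intro i
  have h1 := idx_permToList σ i.isLt
  have h2 := idx_permToList τ i.isLt
  rw [h] at h1
  apply Fin.val_injective
  rw [Fin.eta] at h1 h2
  rw [← h1, ← h2]

lemma exists_perm_of_list {n : ℕ} (l : List ℕ) (hlen : l.length = n) (hnd : l.Nodup)
    (hmem : ∀ x, x ∈ l ↔ x < n) : ∃ σ : Equiv.Perm (Fin n), permToList σ = l := by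
  have hf : ∀ i : Fin n, idx l (i : ℕ) < n := by
    intro i
    have : idx l (i : ℕ) ∈ l := idx_mem (by omega)
    exact (hmem _).mp this
  set f : Fin n → Fin n := fun i => ⟨idx l (i : ℕ), hf i⟩ with hfdef
  have hinj : Function.Injective f := by
    intro a b hab
    have hthis : idx l (a : ℕ) = idx l (b : ℕ) := congrArg Fin.val hab
    have h1 : idx l (a : ℕ) = l[(a : ℕ)]'(by omega) := idx_lt_length (by omega)
    have h2 : idx l (b : ℕ) = l[(b : ℕ)]'(by omega) := idx_lt_length (by omega)
    rw [h1, h2] at hthis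
    exact Fin.val_injective ((hnd.getElem_inj_iff).mp hthis)
  refine ⟨Equiv.ofBijective f (Finite.injective_iff_bijective.mp hinj), ?_⟩
  apply List.ext_getElem (by simp [length_permToList, hlen])
  intro i h1 h2
  rw [length_permToList] at h1
  simp only [permToList, List.getElem_ofFn]
  rw [Equiv.ofBijective_apply]
  show idx l i = l[i]
  exact idx_lt_length h2

/-- counting trues as a filtered card -/
lemma ctrue_eq_sum : ∀ w : List Bool,
    ctrue w = ∑ i ∈ Finset.range w.length, (if w.getD i false = true then 1 else 0)
  | [] => by simp [ctrue]
  | b :: t => by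
      have ih := ctrue_eq_sum t
      rw [List.length_cons, Finset.sum_range_succ']
      have e : (∑ i ∈ Finset.range t.length,
          if (b :: t).getD (i+1) false = true then (1:ℕ) else 0) = ctrue t := ih.symm
      rw [e]
      have e2 : ((b :: t).getD 0 false) = b := rfl
      rw [e2]
      cases b <;> simp [ctrue, List.count_cons]

lemma ctrue_eq_card (w : List Bool) :
    ctrue w = ((Finset.range w.length).filter (fun i => w.getD i false = true)).card := by
  rw [ctrue_eq_sum w, Finset.card_filter]
lemma permVal_eq_idx {n : ℕ} (σ : Equiv.Perm (Fin n)) {j : ℕ} (h : j < n) :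
    permVal σ j = idx (permToList σ) j := by
  rw [idx_permToList σ h]
  unfold permVal
  rw [dif_pos h]

lemma idx_ne_idx {n : ℕ} (σ : Equiv.Perm (Fin n)) {p q : ℕ} (hp : p < n) (hq : q < n)
    (hne : p ≠ q) : idx (permToList σ) p ≠ idx (permToList σ) q := by
  rw [idx_permToList σ hp, idx_permToList σ hq]
  intro hc
  have := σ.injective (Fin.val_injective hc)
  rw [Fin.mk.injEq] at this
  exact hne this

lemma desc_eq_ctrue {n : ℕ} (σ : Equiv.Perm (Fin n)) :
    desc σ = ctrue (dword (permToList σ)) := by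
  rw [ctrue_eq_card, dword_length, length_permToList]
  unfold desc
  congr 1
  apply Finset.filter_congr
  intro i hi
  rw [Finset.mem_range] at hi
  have h1 : i + 1 < n := by omega
  rw [dword_getD _ i (by rw [length_permToList]; omega)]
  rw [permVal_eq_idx σ h1, permVal_eq_idx σ (by omega)]
  simp
lemma dword_getD_perm {n : ℕ} (σ : Equiv.Perm (Fin n)) {i : ℕ} (h : i + 1 < n) :
    (dword (permToList σ)).getD i false
      = decide (idx (permToList σ) (i+1) < idx (permToList σ) i) :=
  dword_getD _ i (by rw [length_permToList]; omega)

lemma cmch_one {n k : ℕ} (hn : 1 ≤ n) (hk : 2 ≤ k) (σ : Equiv.Perm (Fin n)) :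
    cmch (1 : Equiv.Perm (Fin k)) σ = mtch false k (dword (permToList σ)) := by
  unfold cmch mtch
  rw [dword_length, length_permToList]
  have hrange : n - 1 + 2 - k = n + 1 - k := by omega
  rw [hrange]
  congr 1
  apply Finset.filter_congr
  intro i hi
  rw [Finset.mem_range] at hi
  have hik : i + k ≤ n := by omega
  constructor
  · intro hP t ht
    have ha : t < k := by omega
    have hb : t + 1 < k := by omega
    have hval := (hP ⟨t, ha⟩ ⟨t+1, hb⟩).mpr (by rw [Fin.lt_def]; simp)
    simp only [Fin.val_mk] at hval
    rw [permVal_eq_idx σ (by omega), permVal_eq_idx σ (by omega)] at hval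
    rw [dword_getD_perm σ (by omega)]
    apply decide_eq_false
    rw [show i + t + 1 = i + (t+1) from rfl]
    omega
  · intro hQ a b
    have step : ∀ t, t < k - 1 →
        idx (permToList σ) (i+t) < idx (permToList σ) (i+(t+1)) := by
      intro t ht
      have hq := hQ t ht
      rw [dword_getD_perm σ (by omega)] at hq
      have h2 : ¬ (idx (permToList σ) (i+t+1) < idx (permToList σ) (i+t)) := by
        intro hc
        rw [decide_eq_true hc] at hq
        exact Bool.true_eq_false.mp hq
      have h3 : idx (permToList σ) (i+t) ≠ idx (permToList σ) (i+(t+1)) :=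
        idx_ne_idx σ (by omega) (by omega) (by omega)
      rw [show i + t + 1 = i + (t+1) from rfl] at h2
      omega
    have mono : ∀ t, t < k → ∀ s, s < t →
        idx (permToList σ) (i+s) < idx (permToList σ) (i+t) := by
      intro t
      induction t with
      | zero => intro _ s hs; omega
      | succ t ih =>
        intro ht s hs
        rcases Nat.lt_or_ge s t with h | h
        · have h1 := ih (by omega) s h
          have h2 := step t (by omega)
          omega
        · have he : s = t := by omega
          subst he
          exact step s (by omega)
    simp only [Equiv.Perm.one_apply]
    rw [permVal_eq_idx σ (by omega), permVal_eq_idx σ (by omega), Fin.lt_def]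
    constructor
    · intro hv
      by_contra hc
      rcases Nat.lt_or_ge (b : ℕ) (a : ℕ) with h | h
      · have := mono a a.isLt b h
        omega
      · have he : (a : ℕ) = (b : ℕ) := by omega
        rw [he] at hv
        omega
    · intro hab
      exact mono b b.isLt a hab

lemma cmch_rev {n k : ℕ} (hn : 1 ≤ n) (hk : 2 ≤ k) (σ : Equiv.Perm (Fin n)) :
    cmch (Fin.revPerm : Equiv.Perm (Fin k)) σ = mtch true k (dword (permToList σ)) := by
  unfold cmch mtch
  rw [dword_length, length_permToList]
  have hrange : n - 1 + 2 - k = n + 1 - k := by omega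
  rw [hrange]
  congr 1
  apply Finset.filter_congr
  intro i hi
  rw [Finset.mem_range] at hi
  have hik : i + k ≤ n := by omega
  constructor
  · intro hP t ht
    have ha : t < k := by omega
    have hb : t + 1 < k := by omega
    have hval := (hP ⟨t+1, hb⟩ ⟨t, ha⟩).mpr (by
      simp only [Fin.revPerm_apply]
      rw [Fin.rev_lt_rev, Fin.lt_def]
      simp)
    simp only [Fin.val_mk] at hval
    rw [permVal_eq_idx σ (by omega), permVal_eq_idx σ (by omega)] at hval
    rw [dword_getD_perm σ (by omega)]
    apply decide_eq_true
    rw [show i + t + 1 = i + (t+1) from rfl]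
    exact hval
  · intro hQ a b
    have step : ∀ t, t < k - 1 →
        idx (permToList σ) (i+(t+1)) < idx (permToList σ) (i+t) := by
      intro t ht
      have hq := hQ t ht
      rw [dword_getD_perm σ (by omega)] at hq
      have := of_decide_eq_true hq
      rw [show i + t + 1 = i + (t+1) from rfl] at this
      exact this
    have mono : ∀ t, t < k → ∀ s, s < t →
        idx (permToList σ) (i+t) < idx (permToList σ) (i+s) := by
      intro t
      induction t with
      | zero => intro _ s hs; omega
      | succ t ih =>
        intro ht s hs
        rcases Nat.lt_or_ge s t with h | h
        · have h1 := ih (by omega) s h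
          have h2 := step t (by omega)
          omega
        · have he : s = t := by omega
          subst he
          exact step s (by omega)
    simp only [Fin.revPerm_apply]
    rw [permVal_eq_idx σ (by omega), permVal_eq_idx σ (by omega), Fin.rev_lt_rev, Fin.lt_def]
    constructor
    · intro hv
      by_contra hc
      rcases Nat.lt_or_ge (a : ℕ) (b : ℕ) with h | h
      · have := mono b b.isLt a h
        omega
      · have he : (a : ℕ) = (b : ℕ) := by omega
        rw [he] at hv
        omega
    · intro hab
      exact mono a a.isLt b hab
set_option linter.unusedTactic false in
lemma pattern_iff {n : ℕ} (x y z : Fin n) (h1 : x < z) (h2 : z < y) (a b : Fin 3) :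
    (![x,y,z] a < ![x,y,z] b ↔ Equiv.swap (1:Fin 3) 2 a < Equiv.swap (1:Fin 3) 2 b) := by
  have e0 : Equiv.swap (1:Fin 3) 2 0 = 0 := by decide
  have e1 : Equiv.swap (1:Fin 3) 2 1 = 2 := by decide
  have e2 : Equiv.swap (1:Fin 3) 2 2 = 1 := by decide
  fin_cases a <;> fin_cases b <;>
    simp only [Matrix.cons_val_zero, Matrix.cons_val_one, Matrix.head_cons,
      Matrix.cons_val_two, Matrix.tail_cons, e0, e1, e2] <;>
    constructor <;> intro hh <;>
      first
        | exact absurd hh (lt_irrefl _)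
        | exact absurd hh (by decide)
        | assumption
        | exact lt_trans h1 h2
        | (exfalso; exact absurd (lt_trans hh h1) (lt_irrefl _))
        | (exfalso; exact absurd (lt_trans hh h2) (lt_irrefl _))
        | (exfalso; exact absurd (lt_trans (lt_trans hh h1) h2) (lt_irrefl _))
        | (exfalso; exact absurd (lt_trans (lt_trans h1 h2) hh) (lt_irrefl _))
        | (exfalso; exact absurd (lt_trans (lt_trans h2 hh) h1) (lt_irrefl _))
        | (exfalso; exact absurd (lt_trans (lt_trans hh h2) h1) (lt_irrefl _))
        | decide

lemma avoids_iff_av132 {n : ℕ} (σ : Equiv.Perm (Fin n)) :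
    avoids (Equiv.swap (1 : Fin 3) 2) σ ↔ av132 (permToList σ) := by
  constructor
  · intro hA i j k hij hjk hk hpat
    obtain ⟨h1, h2⟩ := hpat
    rw [length_permToList] at hk
    have hin : i < n := by omega
    have hjn : j < n := by omega
    have hkn : k < n := hk
    rw [idx_permToList σ hin, idx_permToList σ hkn] at h1
    rw [idx_permToList σ hjn, idx_permToList σ hkn] at h2
    apply hA
    refine ⟨![⟨i, hin⟩, ⟨j, hjn⟩, ⟨k, hkn⟩], ?_, ?_⟩
    · intro a b hab
      fin_cases a <;> fin_cases b <;>
        first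
          | exact absurd hab (by decide)
          | (simp [Fin.lt_def]; omega)
    · intro a b
      have hcomp : ∀ t, σ (![(⟨i, hin⟩ : Fin n), ⟨j, hjn⟩, ⟨k, hkn⟩] t)
          = ![σ ⟨i, hin⟩, σ ⟨j, hjn⟩, σ ⟨k, hkn⟩] t := by
        intro t
        fin_cases t <;> rfl
      rw [hcomp a, hcomp b]
      exact pattern_iff _ _ _ (Fin.lt_def.mpr h1) (Fin.lt_def.mpr h2) a b
  · intro hav
    rintro ⟨f, hmono, hiff⟩
    have h01 : f 0 < f 1 := hmono (by decide)
    have h12 : f 1 < f 2 := hmono (by decide)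
    have hv02 : σ (f 0) < σ (f 2) := (hiff 0 2).mpr (by decide)
    have hv21 : σ (f 2) < σ (f 1) := (hiff 2 1).mpr (by decide)
    refine hav (f 0 : ℕ) (f 1 : ℕ) (f 2 : ℕ) h01 h12
      (by rw [length_permToList]; exact (f 2).isLt) ⟨?_, ?_⟩
    · rw [idx_permToList σ (f 0).isLt, idx_permToList σ (f 2).isLt]
      simp only [Fin.eta]
      exact hv02
    · rw [idx_permToList σ (f 1).isLt, idx_permToList σ (f 2).isLt]
      simp only [Fin.eta]
      exact hv21
noncomputable def mirrorPerm {n : ℕ} (σ : Equiv.Perm (Fin n)) : Equiv.Perm (Fin n) :=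
  @dite _ (∃ T : Tree Unit, toL T 0 = permToList σ) (Classical.dec _) (fun h =>
    (exists_perm_of_list (toL (mirror h.choose) 0)
      (by rw [toL_length, numNodes_mirror, ← toL_length h.choose 0, h.choose_spec,
            length_permToList])
      (nodup_toL _ _)
      (by intro x
          rw [mem_toL, numNodes_mirror, ← toL_length h.choose 0, h.choose_spec,
            length_permToList]
          omega)).choose) (fun _ => σ)

lemma choose_perm_spec {n : ℕ} (l : List ℕ) (h1 : l.length = n) (h2 : l.Nodup)
    (h3 : ∀ x, x ∈ l ↔ x < n) :
    permToList (exists_perm_of_list l h1 h2 h3).choose = l :=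
  Exists.choose_spec (exists_perm_of_list l h1 h2 h3)

lemma mirrorPerm_spec {n : ℕ} {σ : Equiv.Perm (Fin n)} {T : Tree Unit}
    (hT : toL T 0 = permToList σ) :
    permToList (mirrorPerm σ) = toL (mirror T) 0 := by
  have h : ∃ T : Tree Unit, toL T 0 = permToList σ := ⟨T, hT⟩
  unfold mirrorPerm
  rw [dif_pos h]
  have he : h.choose = T := toL_inj _ _ 0 (h.choose_spec.trans hT.symm)
  rw [choose_perm_spec, he]
  · rw [toL_length, numNodes_mirror, ← toL_length h.choose 0, h.choose_spec, length_permToList]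
  · exact nodup_toL _ _
  · intro x
    rw [mem_toL, numNodes_mirror, ← toL_length h.choose 0, h.choose_spec, length_permToList]
    omega

lemma numNodes_of_toL {n : ℕ} {σ : Equiv.Perm (Fin n)} {T : Tree Unit}
    (hT : toL T 0 = permToList σ) : T.numNodes = n := by
  rw [← toL_length T 0, hT, length_permToList]

lemma mirrorPerm_main {n k : ℕ} (hn : 1 ≤ n) (hk : 2 ≤ k) (σ : Equiv.Perm (Fin n))
    (hσ : avoids (Equiv.swap (1 : Fin 3) 2) σ) :
    avoids (Equiv.swap (1 : Fin 3) 2) (mirrorPerm σ) ∧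
    desc (mirrorPerm σ) = (n - 1) - desc σ ∧
    cmch (Fin.revPerm : Equiv.Perm (Fin k)) (mirrorPerm σ) = cmch (1 : Equiv.Perm (Fin k)) σ ∧
    cmch (1 : Equiv.Perm (Fin k)) (mirrorPerm σ) = cmch (Fin.revPerm : Equiv.Perm (Fin k)) σ ∧
    mirrorPerm (mirrorPerm σ) = σ := by
  obtain ⟨T, hT⟩ := exists_tree n 0 (permToList σ) (length_permToList σ) (nodup_permToList σ)
    (by intro x; rw [mem_permToList]; omega) ((avoids_iff_av132 σ).mp hσ)
  have hn1 : T.numNodes = n := numNodes_of_toL hT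
  have hspec := mirrorPerm_spec hT
  have hT' : toL (mirror T) 0 = permToList (mirrorPerm σ) := hspec.symm
  refine ⟨?_, ?_, ?_, ?_, ?_⟩
  · rw [avoids_iff_av132, hspec]
    exact av132_toL _ _
  · have e1 : desc σ = ctrue (wrd T) := by
      rw [desc_eq_ctrue, ← hT, dword_toL]
    have e2 : desc (mirrorPerm σ) = ctrue (wrd (mirror T)) := by
      rw [desc_eq_ctrue, hspec, dword_toL]
    rw [e2, wrd_mirror, ctrue_revnot, wrd_length, hn1, e1]
  · rw [cmch_rev hn hk, hspec, dword_toL, wrd_mirror, mtch_revnot k hk]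
    rw [cmch_one hn hk, ← hT, dword_toL]
  · rw [cmch_one hn hk, hspec, dword_toL, wrd_mirror, mtch_revnot' k hk]
    rw [cmch_rev hn hk, ← hT, dword_toL]
  · have hspec2 := mirrorPerm_spec hT'
    rw [mirror_mirror, hT] at hspec2
    exact permToList_inj hspec2

/-- in `S_n(132)` the joint distribution of `(des, 12⋯k-mch)` at `(d, j)`
matches that of `(des, k⋯21-mch)` at `(n-1-d, j)`. -/
theorem stmt_2 (k n : ℕ) (hk : 2 ≤ k) (hn : 1 ≤ n) (d j : ℕ) (hd : d ≤ n - 1) :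
    Nat.card {σ : Equiv.Perm (Fin n) //
        avoids (Equiv.swap (1 : Fin 3) 2) σ ∧ desc σ = d ∧
        cmch (1 : Equiv.Perm (Fin k)) σ = j} =
    Nat.card {σ : Equiv.Perm (Fin n) //
        avoids (Equiv.swap (1 : Fin 3) 2) σ ∧ desc σ = n - 1 - d ∧
        cmch (Fin.revPerm : Equiv.Perm (Fin k)) σ = j} := by
  apply Nat.card_congr
  exact
    { toFun := fun s =>
        ⟨mirrorPerm s.1, by
          obtain ⟨h1, h2, h3⟩ := s.2
          obtain ⟨m1, m2, m3, m4, m5⟩ := mirrorPerm_main (k := k) hn hk s.1 h1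
          exact ⟨m1, by rw [m2, h2], by rw [m3, h3]⟩⟩
      invFun := fun s =>
        ⟨mirrorPerm s.1, by
          obtain ⟨h1, h2, h3⟩ := s.2
          obtain ⟨m1, m2, m3, m4, m5⟩ := mirrorPerm_main (k := k) hn hk s.1 h1
          exact ⟨m1, by rw [m2, h2]; omega, by rw [m4, h3]⟩⟩
      left_inv := fun s => by
        obtain ⟨h1, h2, h3⟩ := s.2
        obtain ⟨m1, m2, m3, m4, m5⟩ := mirrorPerm_main (k := k) hn hk s.1 h1
        exact Subtype.ext m5
      right_inv := fun s => by
        obtain ⟨h1, h2, h3⟩ := s.2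
        obtain ⟨m1, m2, m3, m4, m5⟩ := mirrorPerm_main (k := k) hn hk s.1 h1
        exact Subtype.ext m5 }
end

section
/- For every n ≥ 1, the number of permutations σ ∈ S_n(132) with 231-mch(σ) = 0 (i.e. σ classically avoids 132 and has no consecutive 231-match) equals 2^{n−1}. -/
open Finset

def Valley {n : ℕ} (σ : Equiv.Perm (Fin n)) : Prop :=
  ∀ i : ℕ, (h : i + 2 < n) →
    σ ⟨i, by omega⟩ < σ ⟨i+1, by omega⟩ → σ ⟨i+1, by omega⟩ < σ ⟨i+2, h⟩

lemma asc_prop {n : ℕ} {σ : Equiv.Perm (Fin n)} (hV : Valley σ) :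
    ∀ k, (hk : k + 1 < n) → ∀ j, (hj : j ≤ k) →
      σ ⟨j, by omega⟩ < σ ⟨j+1, by omega⟩ → σ ⟨k, by omega⟩ < σ ⟨k+1, hk⟩ := by
  intro k
  induction k with
  | zero => intro hk j hj h; interval_cases j; exact h
  | succ m ih =>
      intro hk j hj h
      rcases Nat.lt_or_ge j (m+1) with hlt | hge
      · exact hV m hk (ih (by omega) j (by omega) h)
      · have : j = m + 1 := by omega
        subst this; exact h

lemma inc_after {n : ℕ} {σ : Equiv.Perm (Fin n)} (hV : Valley σ)
    {j : ℕ} (hj : j + 1 < n) (hasc : σ ⟨j, by omega⟩ < σ ⟨j+1, hj⟩) :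
    ∀ q, (hq : q < n) → ∀ p, (hp1 : j ≤ p) → (hp2 : p < q) →
      σ ⟨p, by omega⟩ < σ ⟨q, hq⟩ := by
  intro q
  induction q with
  | zero => omega
  | succ m ih =>
      intro hq p hp1 hp2
      have hm : σ ⟨m, by omega⟩ < σ ⟨m+1, hq⟩ :=
        asc_prop hV m hq j (by omega) hasc
      rcases Nat.lt_or_ge p m with hlt | hge
      · exact (ih (by omega) p hp1 hlt).trans hm
      · have : p = m := by omega
        subst this; exact hm

lemma exists_asc {n : ℕ} (σ : Equiv.Perm (Fin n)) :
    ∀ q, (hq : q < n) → ∀ p, (hp : p < q) →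
      σ ⟨p, by omega⟩ < σ ⟨q, hq⟩ →
      ∃ j, p ≤ j ∧ j + 1 ≤ q ∧ ∃ h : j + 1 < n, σ ⟨j, by omega⟩ < σ ⟨j+1, h⟩ := by
  intro q
  induction q with
  | zero => omega
  | succ m ih =>
      intro hq p hp hlt
      rcases Nat.lt_or_ge p m with hpm | hpm
      · rcases lt_trichotomy (σ ⟨m, by omega⟩) (σ ⟨m+1, hq⟩) with h1 | h1 | h1
        · exact ⟨m, by omega, by omega, hq, h1⟩
        · exfalso
          have := σ.injective h1
          simp only [Fin.mk.injEq] at this; omega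
        · have : σ ⟨p, by omega⟩ < σ ⟨m, by omega⟩ := hlt.trans h1
          obtain ⟨j, hj1, hj2, hj3⟩ := ih (by omega) p hpm this
          exact ⟨j, hj1, by omega, hj3⟩
      · have : p = m := by omega
        subst this
        exact ⟨p, le_refl _, le_refl _, hq, hlt⟩
lemma permVal_lt_iff {n : ℕ} (σ : Equiv.Perm (Fin n)) {i j : ℕ} (hi : i < n) (hj : j < n) :
    (permVal σ i < permVal σ j) ↔ σ ⟨i, hi⟩ < σ ⟨j, hj⟩ := by
  unfold permVal
  rw [dif_pos hi, dif_pos hj]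
  exact Fin.lt_def.symm

lemma mem_iff_forward {n : ℕ} (σ : Equiv.Perm (Fin n))
    (hav : avoids (Equiv.swap (1 : Fin 3) 2) σ) (hc : cmch (finRotate 3) σ = 0) :
    Valley σ := by
  intro i h2 h01
  by_contra h12'
  have hne : σ ⟨i+1, by omega⟩ ≠ σ ⟨i+2, h2⟩ := fun h => by
    have := σ.injective h; simp only [Fin.mk.injEq] at this; omega
  have h12 : σ ⟨i+2, h2⟩ < σ ⟨i+1, by omega⟩ := by
    rcases lt_or_gt_of_ne hne with h | h
    · exact absurd h h12'
    · exact h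
  rcases lt_trichotomy (σ ⟨i, by omega⟩) (σ ⟨i+2, h2⟩) with h02 | h02 | h02
  · -- 132 pattern at i, i+1, i+2
    apply hav
    refine ⟨fun a => ⟨i + (a : ℕ), by omega⟩, ?_, ?_⟩
    · intro a b hab
      simp only [Fin.mk_lt_mk]
      have : (a : ℕ) < b := hab
      omega
    · intro a b
      fin_cases a <;> fin_cases b
      · exact iff_of_false (lt_irrefl _) (by decide)
      · exact iff_of_true h01 (by decide)
      · exact iff_of_true h02 (by decide)
      · exact iff_of_false (asymm h01) (by decide)
      · exact iff_of_false (lt_irrefl _) (by decide)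
      · exact iff_of_false (asymm h12) (by decide)
      · exact iff_of_false (asymm h02) (by decide)
      · exact iff_of_true h12 (by decide)
      · exact iff_of_false (lt_irrefl _) (by decide)
  · have := σ.injective h02; simp only [Fin.mk.injEq] at this; omega
  · -- 231 match at i
    have hmem : i ∈ (Finset.range (n + 1 - 3)).filter (fun i =>
        ∀ a b : Fin 3, (permVal σ (i + (a : ℕ)) < permVal σ (i + (b : ℕ)) ↔
          (finRotate 3) a < (finRotate 3) b)) := by
      rw [Finset.mem_filter]
      refine ⟨Finset.mem_range.mpr (by omega), ?_⟩
      intro a b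
      fin_cases a <;> fin_cases b
      · exact iff_of_false (lt_irrefl _) (by decide)
      · exact iff_of_true ((permVal_lt_iff σ (by omega) (by omega)).mpr h01) (by decide)
      · exact iff_of_false ((permVal_lt_iff σ (by omega) (by omega)).not.mpr (asymm h02)) (by decide)
      · exact iff_of_false ((permVal_lt_iff σ (by omega) (by omega)).not.mpr (asymm h01)) (by decide)
      · exact iff_of_false (lt_irrefl _) (by decide)
      · exact iff_of_false ((permVal_lt_iff σ (by omega) (by omega)).not.mpr (asymm h12)) (by decide)
      · exact iff_of_true ((permVal_lt_iff σ (by omega) (by omega)).mpr h02) (by decide)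
      · exact iff_of_true ((permVal_lt_iff σ (by omega) (by omega)).mpr h12) (by decide)
      · exact iff_of_false (lt_irrefl _) (by decide)
    rw [cmch, Finset.card_eq_zero] at hc
    rw [hc] at hmem
    exact absurd hmem (Finset.notMem_empty i)

lemma mem_iff_backward {n : ℕ} (σ : Equiv.Perm (Fin n)) (hV : Valley σ) :
    avoids (Equiv.swap (1 : Fin 3) 2) σ ∧ cmch (finRotate 3) σ = 0 := by
  constructor
  · rintro ⟨f, hmono, hiff⟩
    have h01 : σ (f 0) < σ (f 1) := (hiff 0 1).mpr (by decide)
    have h21 : σ (f 2) < σ (f 1) := (hiff 2 1).mpr (by decide)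
    have hf01 : f 0 < f 1 := hmono (by decide)
    have hf12 : f 1 < f 2 := hmono (by decide)
    have hp : ((f 0 : ℕ)) < (f 1 : ℕ) := hf01
    have hval : σ ⟨(f 0 : ℕ), (f 0).isLt⟩ < σ ⟨(f 1 : ℕ), (f 1).isLt⟩ := by
      simpa [Fin.eta] using h01
    obtain ⟨j, hj1, hj2, hj3, hasc⟩ := exists_asc σ (f 1 : ℕ) (f 1).isLt (f 0 : ℕ) hp hval
    have : σ ⟨(f 1 : ℕ), (f 1).isLt⟩ < σ ⟨(f 2 : ℕ), (f 2).isLt⟩ :=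
      inc_after hV hj3 hasc (f 2 : ℕ) (f 2).isLt (f 1 : ℕ) (by omega) hf12
    have : σ (f 1) < σ (f 2) := by simpa [Fin.eta] using this
    exact absurd h21 (asymm this)
  · rw [cmch, Finset.card_eq_zero, Finset.filter_eq_empty_iff]
    intro i hi hP
    have hin : i + 2 < n := by
      have := Finset.mem_range.mp hi; omega
    have h1 : σ ⟨i, by omega⟩ < σ ⟨i+1, by omega⟩ :=
      (permVal_lt_iff σ (by omega) (by omega)).mp ((hP 0 1).mpr (by decide))
    have h2 : σ ⟨i+1, by omega⟩ < σ ⟨i+2, hin⟩ := hV i hin h1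
    have := (hP 1 2).mp ((permVal_lt_iff σ (by omega : i+1 < n) (by omega : i+2 < n)).mpr h2)
    exact absurd this (by decide)
section Structural
variable {n : ℕ} (hn : 0 < n) (σ : Equiv.Perm (Fin n))

/-- every position strictly before the position of 0 is a descent -/
lemma desc_before (hV : Valley σ) (p : ℕ) (hp : p + 1 ≤ (σ.symm ⟨0, hn⟩ : ℕ)) :
    σ ⟨p+1, by omega⟩ < σ ⟨p, by omega⟩ := by
  set t := (σ.symm ⟨0, hn⟩ : ℕ) with ht
  have htn : t < n := (σ.symm ⟨0, hn⟩).isLt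
  by_contra hcon
  have hne : σ ⟨p, by omega⟩ ≠ σ ⟨p+1, by omega⟩ := fun h => by
    have := σ.injective h; simp only [Fin.mk.injEq] at this; omega
  have hasc : σ ⟨p, by omega⟩ < σ ⟨p+1, by omega⟩ := by
    rcases lt_or_gt_of_ne hne with h | h
    · exact h
    · exact absurd h hcon
  have h2 : σ ⟨t-1, by omega⟩ < σ ⟨t-1+1, by omega⟩ :=
    asc_prop hV (t-1) (by omega) p (by omega) hasc
  have h3 : σ ⟨t-1+1, by omega⟩ = ⟨0, hn⟩ := by
    have : (⟨t-1+1, by omega⟩ : Fin n) = σ.symm ⟨0, hn⟩ := by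
      apply Fin.ext; simp only; omega
    rw [this, Equiv.apply_symm_apply]
  rw [h3] at h2
  exact absurd h2 (by simp [Fin.lt_def])

lemma dec_left (hV : Valley σ) :
    ∀ q, (hq : q ≤ (σ.symm ⟨0, hn⟩ : ℕ)) → ∀ p, (hp : p < q) →
      σ ⟨q, by omega⟩ < σ ⟨p, by omega⟩ := by
  have htn := (σ.symm ⟨0, hn⟩).isLt
  intro q
  induction q with
  | zero => omega
  | succ m ih =>
      intro hq p hp
      have hd : σ ⟨m+1, by omega⟩ < σ ⟨m, by omega⟩ := desc_before hn σ hV m hq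
      rcases Nat.lt_or_ge p m with h | h
      · exact hd.trans (ih (by omega) p h)
      · have : p = m := by omega
        subst this; exact hd

lemma inc_right (hV : Valley σ) :
    ∀ p, (hp : (σ.symm ⟨0, hn⟩ : ℕ) ≤ p) → ∀ q, (hq1 : p < q) → (hq2 : q < n) →
      σ ⟨p, by omega⟩ < σ ⟨q, hq2⟩ := by
  set t := (σ.symm ⟨0, hn⟩ : ℕ) with ht
  intro p hp q hq1 hq2
  have htq : t + 1 < n := by omega
  have h0 : σ ⟨t, by omega⟩ = ⟨0, hn⟩ := by
    have : (⟨t, by omega⟩ : Fin n) = σ.symm ⟨0, hn⟩ := by apply Fin.ext; simp only; exact ht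
    rw [this, Equiv.apply_symm_apply]
  have hasc : σ ⟨t, by omega⟩ < σ ⟨t+1, htq⟩ := by
    rw [h0]
    rcases Nat.eq_zero_or_pos ((σ ⟨t+1, htq⟩ : Fin n) : ℕ) with h | h
    · exfalso
      have : σ ⟨t+1, htq⟩ = ⟨0, hn⟩ := Fin.ext h
      rw [← h0] at this
      have := σ.injective this
      simp only [Fin.mk.injEq] at this; omega
    · exact Fin.lt_def.mpr (by simpa using h)
  exact inc_after hV htq hasc q hq2 p hp hq1

end Structural
section Cards

lemma card_filter_val_Ico (m a c : ℕ) (h : c ≤ m) :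
    ((Finset.univ : Finset (Fin m)).filter fun p : Fin m => a ≤ (p : ℕ) ∧ (p : ℕ) < c).card
      = c - a := by
  have himg : (((Finset.univ : Finset (Fin m)).filter
        fun p : Fin m => a ≤ (p : ℕ) ∧ (p : ℕ) < c).image Fin.val) = Finset.Ico a c := by
    ext x
    simp only [Finset.mem_image, Finset.mem_filter, Finset.mem_univ, true_and, Finset.mem_Ico]
    constructor
    · rintro ⟨p, hp, rfl⟩; exact hp
    · rintro ⟨h1, h2⟩; exact ⟨⟨x, by omega⟩, ⟨h1, h2⟩, rfl⟩
  have := Finset.card_image_of_injective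
    (((Finset.univ : Finset (Fin m)).filter fun p : Fin m => a ≤ (p : ℕ) ∧ (p : ℕ) < c))
    (Fin.val_injective)
  rw [himg] at this
  rw [← this, Nat.card_Ico]

lemma card_symm_lt {n : ℕ} (σ : Equiv.Perm (Fin n)) (c : Fin n) :
    ((Finset.univ : Finset (Fin n)).filter fun u => σ.symm u < c).card = (c : ℕ) := by
  have himg : ((Finset.univ : Finset (Fin n)).filter fun u => σ.symm u < c) =
      Finset.image σ ((Finset.univ : Finset (Fin n)).filter fun p => p < c) := by
    ext u
    simp only [Finset.mem_filter, Finset.mem_image, Finset.mem_univ, true_and]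
    constructor
    · intro h
      exact ⟨σ.symm u, h, Equiv.apply_symm_apply σ u⟩
    · rintro ⟨p, hp, rfl⟩
      rwa [Equiv.symm_apply_apply]
  rw [himg, Finset.card_image_of_injective _ σ.injective]
  have h2 : ((Finset.univ : Finset (Fin n)).filter fun p => p < c) =
      (Finset.univ : Finset (Fin n)).filter fun p : Fin n => 0 ≤ (p : ℕ) ∧ (p : ℕ) < (c : ℕ) := by
    apply Finset.filter_congr
    intro p _
    constructor
    · intro h; exact ⟨Nat.zero_le _, h⟩
    · intro h; exact Fin.lt_def.mpr h.2
  rw [h2, card_filter_val_Ico n 0 c c.isLt.le]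
  omega

end Cards
section ValleyCount
variable {n : ℕ} (hn : 0 < n) (σ : Equiv.Perm (Fin n))

lemma card_left_values (hV : Valley σ) (v : Fin n)
    (hv : σ.symm v < σ.symm ⟨0, hn⟩) :
    ((Finset.univ : Finset (Fin n)).filter
        fun u => u ≠ ⟨0, hn⟩ ∧ u ≤ v ∧ σ.symm u < σ.symm ⟨0, hn⟩).card
      = (σ.symm ⟨0, hn⟩ : ℕ) - (σ.symm v : ℕ) := by
  set t := (σ.symm ⟨0, hn⟩ : ℕ) with htdef
  have himg : ((Finset.univ : Finset (Fin n)).filter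
        fun u => u ≠ ⟨0, hn⟩ ∧ u ≤ v ∧ σ.symm u < σ.symm ⟨0, hn⟩) =
      Finset.image σ ((Finset.univ : Finset (Fin n)).filter
        fun p : Fin n => (σ.symm v : ℕ) ≤ (p : ℕ) ∧ (p : ℕ) < t) := by
    ext u
    simp only [Finset.mem_filter, Finset.mem_image, Finset.mem_univ, true_and]
    constructor
    · rintro ⟨huz, huv, hul⟩
      refine ⟨σ.symm u, ⟨?_, Fin.lt_def.mp hul⟩, Equiv.apply_symm_apply σ u⟩
      by_contra hcon
      push_neg at hcon
      have hlt : σ ⟨(σ.symm v : ℕ), (σ.symm v).isLt⟩ < σ ⟨(σ.symm u : ℕ), (σ.symm u).isLt⟩ :=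
        dec_left hn σ hV (σ.symm v : ℕ) (le_of_lt (Fin.lt_def.mp hv)) (σ.symm u : ℕ) hcon
      rw [Fin.eta, Fin.eta, Equiv.apply_symm_apply, Equiv.apply_symm_apply] at hlt
      exact absurd (hlt.trans_le huv) (lt_irrefl v)
    · rintro ⟨p, ⟨hp1, hp2⟩, rfl⟩
      rw [Equiv.symm_apply_apply]
      refine ⟨?_, ?_, Fin.lt_def.mpr hp2⟩
      · intro hcon
        have : p = σ.symm ⟨0, hn⟩ := by
          rw [← hcon]; exact (Equiv.symm_apply_apply σ p).symm
        rw [this] at hp2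
        exact absurd hp2 (lt_irrefl t)
      · rcases Nat.lt_or_ge (σ.symm v : ℕ) (p : ℕ) with h | h
        · have hlt : σ ⟨(p : ℕ), p.isLt⟩ < σ ⟨(σ.symm v : ℕ), (σ.symm v).isLt⟩ :=
            dec_left hn σ hV (p : ℕ) (le_of_lt hp2) (σ.symm v : ℕ) h
          rw [Fin.eta, Fin.eta, Equiv.apply_symm_apply] at hlt
          exact le_of_lt hlt
        · have heq : p = σ.symm v := Fin.ext (by omega)
          rw [heq, Equiv.apply_symm_apply]
  rw [himg, Finset.card_image_of_injective _ σ.injective,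
    card_filter_val_Ico n (σ.symm v : ℕ) t (by omega)]

lemma card_right_values (hV : Valley σ) (v : Fin n)
    (hv : ¬ σ.symm v < σ.symm ⟨0, hn⟩) :
    ((Finset.univ : Finset (Fin n)).filter
        fun u => u ≠ ⟨0, hn⟩ ∧ u ≤ v ∧ ¬ σ.symm u < σ.symm ⟨0, hn⟩).card
      = (σ.symm v : ℕ) - (σ.symm ⟨0, hn⟩ : ℕ) := by
  set t := (σ.symm ⟨0, hn⟩ : ℕ) with htdef
  have hvt : t ≤ (σ.symm v : ℕ) := by
    have := Fin.lt_def.not.mp hv; omega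
  have himg : ((Finset.univ : Finset (Fin n)).filter
        fun u => u ≠ ⟨0, hn⟩ ∧ u ≤ v ∧ ¬ σ.symm u < σ.symm ⟨0, hn⟩) =
      Finset.image σ ((Finset.univ : Finset (Fin n)).filter
        fun p : Fin n => t + 1 ≤ (p : ℕ) ∧ (p : ℕ) < (σ.symm v : ℕ) + 1) := by
    ext u
    simp only [Finset.mem_filter, Finset.mem_image, Finset.mem_univ, true_and]
    constructor
    · rintro ⟨huz, huv, hur⟩
      refine ⟨σ.symm u, ⟨?_, ?_⟩, Equiv.apply_symm_apply σ u⟩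
      · have h1 : t ≤ (σ.symm u : ℕ) := by
          have := Fin.lt_def.not.mp hur; omega
        have h2 : (σ.symm u : ℕ) ≠ t := by
          intro hcon
          have : σ.symm u = σ.symm ⟨0, hn⟩ := Fin.ext hcon
          exact huz (σ.symm.injective this)
        omega
      · have : (σ.symm u : ℕ) ≤ (σ.symm v : ℕ) := by
          by_contra hcon
          push_neg at hcon
          have hlt : σ ⟨(σ.symm v : ℕ), (σ.symm v).isLt⟩ < σ ⟨(σ.symm u : ℕ), (σ.symm u).isLt⟩ :=
            inc_right hn σ hV (σ.symm v : ℕ) hvt (σ.symm u : ℕ) hcon (σ.symm u).isLt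
          rw [Fin.eta, Fin.eta, Equiv.apply_symm_apply, Equiv.apply_symm_apply] at hlt
          exact absurd (hlt.trans_le huv) (lt_irrefl v)
        omega
    · rintro ⟨p, ⟨hp1, hp2⟩, rfl⟩
      rw [Equiv.symm_apply_apply]
      refine ⟨?_, ?_, by rw [Fin.lt_def]; omega⟩
      · intro hcon
        have : p = σ.symm ⟨0, hn⟩ := by
          rw [← hcon]; exact (Equiv.symm_apply_apply σ p).symm
        have : (p : ℕ) = t := by rw [this]
        omega
      · rcases Nat.lt_or_ge (p : ℕ) (σ.symm v : ℕ) with h | h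
        · have hlt : σ ⟨(p : ℕ), p.isLt⟩ < σ ⟨(σ.symm v : ℕ), (σ.symm v).isLt⟩ :=
            inc_right hn σ hV (p : ℕ) (by omega) (σ.symm v : ℕ) h (σ.symm v).isLt
          rw [Fin.eta, Fin.eta, Equiv.apply_symm_apply] at hlt
          exact le_of_lt hlt
        · have heq : p = σ.symm v := Fin.ext (by omega)
          rw [heq, Equiv.apply_symm_apply]
  rw [himg, Finset.card_image_of_injective _ σ.injective,
    card_filter_val_Ico n (t + 1) ((σ.symm v : ℕ) + 1) (by omega)]
  omega

end ValleyCount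
section LbRb
variable {m : ℕ} (b : Fin m → Bool)

def Lb (v : ℕ) : ℕ := ((Finset.univ : Finset (Fin m)).filter
  fun w : Fin m => (w : ℕ) < v ∧ b w = true).card

def Rb (v : ℕ) : ℕ := ((Finset.univ : Finset (Fin m)).filter
  fun w : Fin m => (w : ℕ) < v ∧ b w = false).card

def Tb : ℕ := ((Finset.univ : Finset (Fin m)).filter fun w : Fin m => b w = true).card

lemma Lb_mono {v v' : ℕ} (h : v ≤ v') : Lb b v ≤ Lb b v' := by
  apply Finset.card_le_card
  intro w hw
  simp only [Finset.mem_filter, Finset.mem_univ, true_and] at hw ⊢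
  exact ⟨by omega, hw.2⟩

lemma Rb_mono {v v' : ℕ} (h : v ≤ v') : Rb b v ≤ Rb b v' := by
  apply Finset.card_le_card
  intro w hw
  simp only [Finset.mem_filter, Finset.mem_univ, true_and] at hw ⊢
  exact ⟨by omega, hw.2⟩

lemma Lb_le_Tb (v : ℕ) : Lb b v ≤ Tb b := by
  apply Finset.card_le_card
  intro w hw
  simp only [Finset.mem_filter, Finset.mem_univ, true_and] at hw ⊢
  exact hw.2

lemma Tb_le (v : ℕ) (h : m ≤ v) : Tb b ≤ Lb b v := by
  apply Finset.card_le_card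
  intro w hw
  simp only [Finset.mem_filter, Finset.mem_univ, true_and] at hw ⊢
  exact ⟨by have := w.isLt; omega, hw⟩

lemma Lb_strict (v v' : ℕ) (w : Fin m) (hb : b w = true)
    (h1 : v ≤ (w : ℕ)) (h2 : (w : ℕ) < v') : Lb b v < Lb b v' := by
  apply Finset.card_lt_card
  have hsub : ((Finset.univ : Finset (Fin m)).filter
      fun x : Fin m => (x : ℕ) < v ∧ b x = true) ⊆ ((Finset.univ : Finset (Fin m)).filter
      fun x : Fin m => (x : ℕ) < v' ∧ b x = true) := by
    intro x hx
    simp only [Finset.mem_filter, Finset.mem_univ, true_and] at hx ⊢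
    exact ⟨by omega, hx.2⟩
  rw [Finset.ssubset_iff_of_subset hsub]
  refine ⟨w, ?_, ?_⟩
  · simp only [Finset.mem_filter, Finset.mem_univ, true_and]; exact ⟨h2, hb⟩
  · simp only [Finset.mem_filter, Finset.mem_univ, true_and]
    push_neg
    intro hc; omega

lemma Rb_strict (v v' : ℕ) (w : Fin m) (hb : b w = false)
    (h1 : v ≤ (w : ℕ)) (h2 : (w : ℕ) < v') : Rb b v < Rb b v' := by
  apply Finset.card_lt_card
  have hsub : ((Finset.univ : Finset (Fin m)).filter
      fun x : Fin m => (x : ℕ) < v ∧ b x = false) ⊆ ((Finset.univ : Finset (Fin m)).filter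
      fun x : Fin m => (x : ℕ) < v' ∧ b x = false) := by
    intro x hx
    simp only [Finset.mem_filter, Finset.mem_univ, true_and] at hx ⊢
    exact ⟨by omega, hx.2⟩
  rw [Finset.ssubset_iff_of_subset hsub]
  refine ⟨w, ?_, ?_⟩
  · simp only [Finset.mem_filter, Finset.mem_univ, true_and]; exact ⟨h2, hb⟩
  · simp only [Finset.mem_filter, Finset.mem_univ, true_and]
    push_neg
    intro hc; omega

lemma Rb_zero : Rb b 0 = 0 := by
  unfold Rb
  rw [Finset.card_eq_zero, Finset.filter_eq_empty_iff]
  intro w _; push_neg; intro h; omega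

lemma Lb_add_Rb (v : ℕ) (h : v ≤ m) : Lb b v + Rb b v = v := by
  have hsplit := Finset.card_filter_add_card_filter_not
    (s := (Finset.univ : Finset (Fin m)).filter fun w : Fin m => (w : ℕ) < v)
    (p := fun w => b w = true)
  have h1 : ((Finset.univ : Finset (Fin m)).filter fun w : Fin m => (w : ℕ) < v).filter
      (fun w => b w = true) = (Finset.univ : Finset (Fin m)).filter
      fun w : Fin m => (w : ℕ) < v ∧ b w = true := by
    rw [Finset.filter_filter]
  have h2 : ((Finset.univ : Finset (Fin m)).filter fun w : Fin m => (w : ℕ) < v).filter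
      (fun w => ¬ b w = true) = (Finset.univ : Finset (Fin m)).filter
      fun w : Fin m => (w : ℕ) < v ∧ b w = false := by
    rw [Finset.filter_filter]
    apply Finset.filter_congr
    intro w _
    simp [Bool.not_eq_true]
  have h3 : ((Finset.univ : Finset (Fin m)).filter fun w : Fin m => (w : ℕ) < v).card = v := by
    have h4 : ((Finset.univ : Finset (Fin m)).filter fun w : Fin m => (w : ℕ) < v) =
        (Finset.univ : Finset (Fin m)).filter fun w : Fin m => 0 ≤ (w : ℕ) ∧ (w : ℕ) < v := by
      apply Finset.filter_congr; intro w _; simp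
    rw [h4, card_filter_val_Ico m 0 v h]; omega
  rw [h1, h2, h3] at hsplit
  exact hsplit

lemma Rb_le (v : ℕ) (hv : v ≤ m) : Tb b + Rb b v ≤ m := by
  have h1 := Lb_add_Rb b m (le_refl m)
  have h2 := Tb_le b m (le_refl m)
  have h3 := Rb_mono b hv
  omega

end LbRb
section Posb
variable {m : ℕ} (b : Fin m → Bool)

def posb (v : ℕ) : ℕ :=
  if ∃ w : Fin m, (w : ℕ) + 1 = v ∧ b w = true then Tb b - Lb b v else Tb b + Rb b v

lemma posb_zero : posb b 0 = Tb b := by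
  have hne : ¬ ∃ w : Fin m, (w : ℕ) + 1 = 0 ∧ b w = true := by
    rintro ⟨w, hw, _⟩; omega
  unfold posb
  rw [if_neg hne, Rb_zero]
  omega

lemma posb_left (w : Fin m) (hb : b w = true) :
    posb b ((w : ℕ) + 1) = Tb b - Lb b ((w : ℕ) + 1) := by
  unfold posb
  rw [if_pos ⟨w, rfl, hb⟩]

lemma posb_right (w : Fin m) (hb : b w = false) :
    posb b ((w : ℕ) + 1) = Tb b + Rb b ((w : ℕ) + 1) := by
  unfold posb
  rw [if_neg]
  rintro ⟨w', hw', hbw'⟩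
  have : w' = w := Fin.ext (by omega)
  rw [this, hb] at hbw'
  exact Bool.false_ne_true hbw'

lemma Lb_pos_of (w : Fin m) (hb : b w = true) : 1 ≤ Lb b ((w : ℕ) + 1) := by
  have := Lb_strict b ((w:ℕ)) ((w:ℕ)+1) w hb (le_refl _) (by omega)
  omega

lemma Rb_pos_of (w : Fin m) (hb : b w = false) : 1 ≤ Rb b ((w : ℕ) + 1) := by
  have h0 : Rb b 0 = 0 := Rb_zero b
  have := Rb_strict b ((w:ℕ)) ((w:ℕ)+1) w hb (by omega) (by omega)
  omega

lemma posb_le (v : ℕ) (hv : v ≤ m) : posb b v ≤ m := by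
  unfold posb
  split
  · have h1 : Tb b ≤ m := by
      have := Tb_le b m (le_refl m)
      have := Lb_add_Rb b m (le_refl m)
      have := Lb_le_Tb b m
      omega
    omega
  · exact Rb_le b v hv

/-- trichotomy of value status -/
lemma posb_cases (v : ℕ) (hv0 : v ≤ m) :
    (v = 0 ∧ posb b v = Tb b) ∨
    (∃ w : Fin m, (w : ℕ) + 1 = v ∧ b w = true ∧
      posb b v = Tb b - Lb b v ∧ 1 ≤ Lb b v ∧ Lb b v ≤ Tb b) ∨
    (∃ w : Fin m, (w : ℕ) + 1 = v ∧ b w = false ∧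
      posb b v = Tb b + Rb b v ∧ 1 ≤ Rb b v) := by
  rcases Nat.eq_zero_or_pos v with h | h
  · left; exact ⟨h, h ▸ posb_zero b⟩
  · have hw : v - 1 < m := by omega
    set w : Fin m := ⟨v - 1, hw⟩ with hwdef
    have hwv : (w : ℕ) + 1 = v := by simp only [hwdef]; omega
    cases hb : b w with
    | true =>
        right; left
        refine ⟨w, hwv, hb, ?_, ?_, Lb_le_Tb b v⟩
        · rw [← hwv]; exact posb_left b w hb
        · rw [← hwv]; exact Lb_pos_of b w hb
    | false =>
        right; right
        refine ⟨w, hwv, hb, ?_, ?_⟩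
        · rw [← hwv]; exact posb_right b w hb
        · rw [← hwv]; exact Rb_pos_of b w hb

lemma posb_inj {v v' : ℕ} (hv : v ≤ m) (hv' : v' ≤ m) (h : posb b v = posb b v') :
    v = v' := by
  rcases posb_cases b v hv with ⟨h0, hp⟩ | ⟨w, hw, hb, hp, hL1, hL2⟩ | ⟨w, hw, hb, hp, hR⟩ <;>
    rcases posb_cases b v' hv' with ⟨h0', hp'⟩ | ⟨w', hw', hb', hp', hL1', hL2'⟩ |
      ⟨w', hw', hb', hp', hR'⟩
  · omega
  · omega
  · omega
  · omega
  · -- left left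
    rcases lt_trichotomy (w : ℕ) (w' : ℕ) with hlt | heq | hgt
    · have := Lb_strict b v v' w' hb' (by omega) (by omega)
      omega
    · omega
    · have := Lb_strict b v' v w hb (by omega) (by omega)
      omega
  · omega
  · omega
  · omega
  · -- right right
    rcases lt_trichotomy (w : ℕ) (w' : ℕ) with hlt | heq | hgt
    · have := Rb_strict b v v' w' hb' (by omega) (by omega)
      omega
    · omega
    · have := Rb_strict b v' v w hb (by omega) (by omega)
      omega

end Posb
section Construct
variable {n : ℕ}

noncomputable def eOf (hn : 0 < n) (b : Fin (n-1) → Bool) : Equiv.Perm (Fin n) :=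
  Equiv.ofBijective (fun v : Fin n => (⟨posb b (v : ℕ), by
      have h1 := posb_le b (v : ℕ) (by have := v.isLt; omega)
      omega⟩ : Fin n))
    (Finite.injective_iff_bijective.mp (by
      intro v v' h
      have h2 : posb b (v : ℕ) = posb b (v' : ℕ) := congrArg Fin.val h
      exact Fin.ext (posb_inj b (by have := v.isLt; omega) (by have := v'.isLt; omega) h2)))

lemma eOf_apply (hn : 0 < n) (b : Fin (n-1) → Bool) (v : Fin n) :
    ((eOf hn b v : Fin n) : ℕ) = posb b (v : ℕ) := rfl

lemma eOf_symm_posb (hn : 0 < n) (b : Fin (n-1) → Bool) (r : Fin n) :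
    posb b (((eOf hn b).symm r : Fin n) : ℕ) = (r : ℕ) :=
  congrArg Fin.val ((eOf hn b).apply_symm_apply r)

lemma G1 (hn : 0 < n) (b : Fin (n-1) → Bool) (p q : ℕ) (hq : q < n) (hpq : p < q)
    (hqT : q ≤ Tb b) :
    (eOf hn b).symm ⟨q, hq⟩ < (eOf hn b).symm ⟨p, by omega⟩ := by
  set v := (eOf hn b).symm ⟨q, hq⟩ with hvdef
  set v' := (eOf hn b).symm ⟨p, by omega⟩ with hvdef'
  have hv : posb b (v : ℕ) = q := eOf_symm_posb hn b _
  have hv' : posb b (v' : ℕ) = p := eOf_symm_posb hn b _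
  have hvm : (v : ℕ) ≤ n - 1 := by have := v.isLt; omega
  have hvm' : (v' : ℕ) ≤ n - 1 := by have := v'.isLt; omega
  rw [Fin.lt_def]
  rcases posb_cases b (v : ℕ) hvm with ⟨h0, hp0⟩ | ⟨w, hw, hb, hpl, hL1, hL2⟩ |
      ⟨w, hw, hb, hpr, hR1⟩ <;>
    rcases posb_cases b (v' : ℕ) hvm' with ⟨h0', hp0'⟩ | ⟨w', hw', hb', hpl', hL1', hL2'⟩ |
      ⟨w', hw', hb', hpr', hR1'⟩
  · omega
  · omega
  · omega
  · omega
  · -- both left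
    have hmono : (v' : ℕ) ≤ (v : ℕ) → Lb b (v' : ℕ) ≤ Lb b (v : ℕ) := fun h => Lb_mono b h
    omega
  · omega
  · omega
  · omega
  · omega

lemma G2 (hn : 0 < n) (b : Fin (n-1) → Bool) (p q : ℕ) (hq : q < n) (hpq : p < q)
    (hpT : Tb b ≤ p) :
    (eOf hn b).symm ⟨p, by omega⟩ < (eOf hn b).symm ⟨q, hq⟩ := by
  set v' := (eOf hn b).symm ⟨p, by omega⟩ with hvdef'
  set v := (eOf hn b).symm ⟨q, hq⟩ with hvdef
  have hv : posb b (v : ℕ) = q := eOf_symm_posb hn b _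
  have hv' : posb b (v' : ℕ) = p := eOf_symm_posb hn b _
  have hvm : (v : ℕ) ≤ n - 1 := by have := v.isLt; omega
  have hvm' : (v' : ℕ) ≤ n - 1 := by have := v'.isLt; omega
  rw [Fin.lt_def]
  rcases posb_cases b (v : ℕ) hvm with ⟨h0, hp0⟩ | ⟨w, hw, hb, hpl, hL1, hL2⟩ |
      ⟨w, hw, hb, hpr, hR1⟩ <;>
    rcases posb_cases b (v' : ℕ) hvm' with ⟨h0', hp0'⟩ | ⟨w', hw', hb', hpl', hL1', hL2'⟩ |
      ⟨w', hw', hb', hpr', hR1'⟩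
  · omega
  · omega
  · omega
  · omega
  · omega
  · omega
  · omega
  · omega
  · -- both right
    have hmono : (v : ℕ) ≤ (v' : ℕ) → Rb b (v : ℕ) ≤ Rb b (v' : ℕ) := fun h => Rb_mono b h
    omega

lemma valley_eOf (hn : 0 < n) (b : Fin (n-1) → Bool) : Valley (eOf hn b).symm := by
  intro i h2 hasc
  rcases le_or_gt (i + 1) (Tb b) with h | h
  · exact absurd hasc (asymm (G1 hn b i (i+1) (by omega) (by omega) h))
  · exact G2 hn b (i+1) (i+2) h2 (by omega) (by omega)

lemma eOf_inj (hn : 0 < n) : Function.Injective (fun b : Fin (n-1) → Bool => eOf hn b) := by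
  intro b b' h
  have happ : ∀ v : Fin n, posb b (v : ℕ) = posb b' (v : ℕ) := by
    intro v
    have := congrFun (congrArg (fun (e : Equiv.Perm (Fin n)) => (e : Fin n → Fin n)) h) v
    exact congrArg Fin.val this
  have hT : Tb b = Tb b' := by
    have := happ ⟨0, hn⟩
    simpa [posb_zero] using this
  funext w
  have hw : (w : ℕ) + 1 < n := by have := w.isLt; omega
  have hp := happ ⟨(w : ℕ) + 1, hw⟩
  simp only at hp
  cases hb : b w with
  | true =>
      cases hb' : b' w with
      | true => rfl
      | false =>
          exfalso
          rw [posb_left b w hb, posb_right b' w hb'] at hp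
          have h1 := Lb_pos_of b w hb
          have h2 := Lb_le_Tb b ((w : ℕ) + 1)
          have h3 := Rb_pos_of b' w hb'
          omega
  | false =>
      cases hb' : b' w with
      | true =>
          exfalso
          rw [posb_right b w hb, posb_left b' w hb'] at hp
          have h1 := Lb_pos_of b' w hb'
          have h2 := Lb_le_Tb b' ((w : ℕ) + 1)
          have h3 := Rb_pos_of b w hb
          omega
      | false => rfl

end Construct
section Ext
variable {n : ℕ}

lemma valley_ext (hn : 0 < n) {σ σ' : Equiv.Perm (Fin n)} (hV : Valley σ) (hV' : Valley σ')
    (h : ∀ u : Fin n, (σ.symm u < σ.symm ⟨0, hn⟩ ↔ σ'.symm u < σ'.symm ⟨0, hn⟩)) :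
    σ = σ' := by
  have hT : (σ.symm ⟨0, hn⟩ : ℕ) = (σ'.symm ⟨0, hn⟩ : ℕ) := by
    rw [← card_symm_lt σ (σ.symm ⟨0, hn⟩), ← card_symm_lt σ' (σ'.symm ⟨0, hn⟩)]
    exact congrArg Finset.card (Finset.filter_congr (fun u _ => h u))
  have hsymm : ∀ v : Fin n, (σ.symm v : ℕ) = (σ'.symm v : ℕ) := by
    intro v
    by_cases hv : σ.symm v < σ.symm ⟨0, hn⟩
    · have hv' := (h v).mp hv
      have c1 := card_left_values hn σ hV v hv
      have c2 := card_left_values hn σ' hV' v hv'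
      have hfe : ((Finset.univ : Finset (Fin n)).filter
            fun u => u ≠ ⟨0, hn⟩ ∧ u ≤ v ∧ σ.symm u < σ.symm ⟨0, hn⟩) =
          ((Finset.univ : Finset (Fin n)).filter
            fun u => u ≠ ⟨0, hn⟩ ∧ u ≤ v ∧ σ'.symm u < σ'.symm ⟨0, hn⟩) :=
        Finset.filter_congr (fun u _ => by
          constructor
          · rintro ⟨a, c, d⟩; exact ⟨a, c, (h u).mp d⟩
          · rintro ⟨a, c, d⟩; exact ⟨a, c, (h u).mpr d⟩)
      rw [hfe] at c1
      have b1 : (σ.symm v : ℕ) < (σ.symm ⟨0, hn⟩ : ℕ) := Fin.lt_def.mp hv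
      have b2 : (σ'.symm v : ℕ) < (σ'.symm ⟨0, hn⟩ : ℕ) := Fin.lt_def.mp hv'
      omega
    · have hv' := fun hc => hv ((h v).mpr hc)
      have c1 := card_right_values hn σ hV v hv
      have c2 := card_right_values hn σ' hV' v hv'
      have hfe : ((Finset.univ : Finset (Fin n)).filter
            fun u => u ≠ ⟨0, hn⟩ ∧ u ≤ v ∧ ¬ σ.symm u < σ.symm ⟨0, hn⟩) =
          ((Finset.univ : Finset (Fin n)).filter
            fun u => u ≠ ⟨0, hn⟩ ∧ u ≤ v ∧ ¬ σ'.symm u < σ'.symm ⟨0, hn⟩) :=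
        Finset.filter_congr (fun u _ => by
          constructor
          · rintro ⟨a, c, d⟩; exact ⟨a, c, fun hc => d ((h u).mpr hc)⟩
          · rintro ⟨a, c, d⟩; exact ⟨a, c, fun hc => d ((h u).mp hc)⟩)
      rw [hfe] at c1
      have b1 : ¬ (σ.symm v : ℕ) < (σ.symm ⟨0, hn⟩ : ℕ) := fun hc => hv (Fin.lt_def.mpr hc)
      have b2 : ¬ (σ'.symm v : ℕ) < (σ'.symm ⟨0, hn⟩ : ℕ) := fun hc => hv' (Fin.lt_def.mpr hc)
      omega
  have h2 : σ.symm = σ'.symm := Equiv.ext (fun v => Fin.ext (hsymm v))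
  rw [← Equiv.symm_symm σ, h2, Equiv.symm_symm]

end Ext

/-- the number of `132`-avoiding permutations of length `n ≥ 1` with no
consecutive `231`-match is `2^(n-1)`. -/
theorem stmt_7 (n : ℕ) (hn : 1 ≤ n) :
    Nat.card {σ : Equiv.Perm (Fin n) //
        avoids (Equiv.swap (1 : Fin 3) 2) σ ∧ cmch (finRotate 3) σ = 0} =
      2 ^ (n - 1) := by
  have hn0 : 0 < n := hn
  have hiff : ∀ σ : Equiv.Perm (Fin n),
      (avoids (Equiv.swap (1 : Fin 3) 2) σ ∧ cmch (finRotate 3) σ = 0) ↔ Valley σ :=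
    fun σ => ⟨fun ⟨h1, h2⟩ => mem_iff_forward σ h1 h2, fun h => mem_iff_backward σ h⟩
  rw [Nat.card_congr (Equiv.subtypeEquivRight hiff)]
  have hcard : Nat.card (Fin (n-1) → Bool) = 2 ^ (n - 1) := by
    simp [Nat.card_eq_fintype_card]
  have hle : Nat.card {σ : Equiv.Perm (Fin n) // Valley σ} ≤ Nat.card (Fin (n-1) → Bool) := by
    apply Nat.card_le_card_of_injective (fun s : {σ : Equiv.Perm (Fin n) // Valley σ} =>
      fun w : Fin (n-1) =>
        decide (s.1.symm ⟨(w : ℕ) + 1, by have := w.isLt; omega⟩ < s.1.symm ⟨0, hn0⟩))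
    intro s s' hss
    apply Subtype.ext
    apply valley_ext hn0 s.2 s'.2
    intro u
    by_cases hu : (u : ℕ) = 0
    · have : u = ⟨0, hn0⟩ := Fin.ext hu
      rw [this]
      exact iff_of_false (lt_irrefl _) (lt_irrefl _)
    · set w : Fin (n-1) := ⟨(u : ℕ) - 1, by have := u.isLt; omega⟩ with hwdef
      have hwu : (⟨(w : ℕ) + 1, by have := w.isLt; omega⟩ : Fin n) = u := by
        apply Fin.ext
        simp only [hwdef]
        omega
      have key := congrFun hss w
      simp only at key
      rw [decide_eq_decide] at key
      rw [← hwu]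
      exact key
  have hge : Nat.card (Fin (n-1) → Bool) ≤ Nat.card {σ : Equiv.Perm (Fin n) // Valley σ} := by
    apply Nat.card_le_card_of_injective (fun b : Fin (n-1) → Bool =>
      (⟨(eOf hn0 b).symm, valley_eOf hn0 b⟩ : {σ : Equiv.Perm (Fin n) // Valley σ}))
    intro b b' h
    have h1 : (eOf hn0 b).symm = (eOf hn0 b').symm := congrArg Subtype.val h
    have h2 : eOf hn0 b = eOf hn0 b' := by
      rw [← Equiv.symm_symm (eOf hn0 b), h1, Equiv.symm_symm]
    exact eOf_inj hn0 h2
  omega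
end
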